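/- arXiv:2109.08352 — 3 statements merged into one kernel-verified Lean document; each statement's English description precedes it below -/
import Mathlib

section
/- Let $X$ be a Banach space, $\alpha>0$, $\beta>0$, $0\le\theta<1$, and let $(S_\tau)_{\tau>0}$ be a family of bounded linear operators on $X$ with $\|S_\tau x\| \le \alpha(\tau^{-\theta}+1)e^{-\beta\tau}\|x\|$ for all $\tau>0$, $x\in X$. If $H:\mathbb{R}\to X$ is almost periodic, then the function $\hat S H(t) := \int_0^\infty S_\tau H(t-\tau)\,d\tau$ is well-defined, bounded, and almost periodic, with $\sup_t\|\hat S H(t)\| \le \alpha(\beta^{\theta-1}\Gamma(1-\theta)+\tfrac1\beta)\sup_t\|H(t)\|$. Moreover for any $T\in\mathbb{R}$, $\sup_t\|\hat S H(t+T)-\hat S H(t)\| \le \alpha(\beta^{\theta-1}\Gamma(1-\theta)+\tfrac1\beta)\sup_t\|H(t+T)-H(t)\|$. -/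
open MeasureTheory Real

/-- Bohr almost periodicity. -/
def IsAlmostPeriodic {X : Type*} [NormedAddCommGroup X] (h : ℝ → X) : Prop :=
  Continuous h ∧ ∀ ε > (0:ℝ), ∃ ℓ > (0:ℝ), ∀ a : ℝ,
    ∃ T ∈ Set.Icc a (a + ℓ), ∀ t : ℝ, ‖h (t + T) - h t‖ < ε

lemma kernel_integrable {α β θ : ℝ} (hα : 0 < α) (hβ : 0 < β) (hθ0 : 0 ≤ θ) (hθ1 : θ < 1) :
    IntegrableOn (fun τ : ℝ => α * (τ ^ (-θ) + 1) * Real.exp (-β * τ)) (Set.Ioi 0) ∧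
    (∫ τ in Set.Ioi (0:ℝ), α * (τ ^ (-θ) + 1) * Real.exp (-β * τ)) =
      α * (β ^ (θ - 1) * Real.Gamma (1 - θ) + 1 / β) := by
  have h1θ : 0 < 1 - θ := by linarith
  -- integrability of τ ^ (-θ) * exp (-β τ)
  have hint1 : IntegrableOn (fun τ : ℝ => τ ^ (-θ) * Real.exp (-β * τ)) (Set.Ioi 0) := by
    have h0 : IntegrableOn (fun x : ℝ => Real.exp (-x) * x ^ (1 - θ - 1)) (Set.Ioi 0) :=
      Real.GammaIntegral_convergent h1θ
    have h2 : IntegrableOn (fun x : ℝ => Real.exp (-(β * x)) * (β * x) ^ (1 - θ - 1))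
        (Set.Ioi 0) := by
      exact (integrableOn_Ioi_comp_mul_left_iff
        (fun x : ℝ => Real.exp (-x) * x ^ (1 - θ - 1)) 0 hβ).2
        (by rw [mul_zero]; exact h0)
    have h3 := h2.const_mul (β ^ θ)
    refine MeasureTheory.IntegrableOn.congr_fun h3 (fun x hx => ?_) measurableSet_Ioi
    have hx0 : (0:ℝ) < x := hx
    have hexp : (1 - θ - 1 : ℝ) = -θ := by ring
    rw [hexp, Real.mul_rpow hβ.le hx0.le]
    have hββ : β ^ θ * β ^ (-θ) = 1 := by
      rw [← Real.rpow_add hβ]; simp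
    calc β ^ θ * (Real.exp (-(β * x)) * (β ^ (-θ) * x ^ (-θ)))
        = (β ^ θ * β ^ (-θ)) * (x ^ (-θ) * Real.exp (-(β * x))) := by ring
      _ = x ^ (-θ) * Real.exp (-β * x) := by rw [hββ, one_mul, neg_mul]
  have hint2 : IntegrableOn (fun τ : ℝ => Real.exp (-β * τ)) (Set.Ioi 0) :=
    exp_neg_integrableOn_Ioi 0 hβ
  -- values of the integrals
  have hval1 : (∫ τ in Set.Ioi (0:ℝ), τ ^ (-θ) * Real.exp (-β * τ))
      = β ^ (θ - 1) * Real.Gamma (1 - θ) := by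
    have h := Real.integral_rpow_mul_exp_neg_mul_Ioi h1θ hβ
    have heq : (∫ τ in Set.Ioi (0:ℝ), τ ^ (-θ) * Real.exp (-β * τ))
        = ∫ t in Set.Ioi (0:ℝ), t ^ (1 - θ - 1) * Real.exp (-(β * t)) := by
      refine setIntegral_congr_fun measurableSet_Ioi (fun x hx => ?_)
      rw [show (1 - θ - 1 : ℝ) = -θ by ring, neg_mul]
    rw [heq, h]
    have : ((1:ℝ) / β) ^ (1 - θ) = β ^ (θ - 1) := by
      rw [one_div, Real.inv_rpow hβ.le, ← Real.rpow_neg hβ.le, neg_sub]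
    rw [this]
  have hval2 : (∫ τ in Set.Ioi (0:ℝ), Real.exp (-β * τ)) = 1 / β := by
    have h := Real.integral_rpow_mul_exp_neg_mul_Ioi one_pos hβ
    have heq : (∫ τ in Set.Ioi (0:ℝ), Real.exp (-β * τ))
        = ∫ t in Set.Ioi (0:ℝ), t ^ ((1:ℝ) - 1) * Real.exp (-(β * t)) := by
      refine setIntegral_congr_fun measurableSet_Ioi (fun x hx => ?_)
      rw [show ((1:ℝ) - 1) = 0 by ring, Real.rpow_zero, one_mul, neg_mul]
    rw [heq, h, Real.rpow_one, Real.Gamma_one, mul_one]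
  have hgeq : (fun τ : ℝ => α * (τ ^ (-θ) + 1) * Real.exp (-β * τ))
      = fun τ : ℝ => α * (τ ^ (-θ) * Real.exp (-β * τ)) + α * Real.exp (-β * τ) := by
    funext τ; ring
  constructor
  · rw [hgeq]; exact (hint1.const_mul α).add (hint2.const_mul α)
  · rw [hgeq, integral_add (hint1.const_mul α) (hint2.const_mul α),
      integral_const_mul, integral_const_mul, hval1, hval2]
    ring

lemma key_bound {X : Type*} [NormedAddCommGroup X] [NormedSpace ℝ X] [CompleteSpace X]
    (α β θ : ℝ) (hα : 0 < α) (hβ : 0 < β) (hθ0 : 0 ≤ θ) (hθ1 : θ < 1)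
    (S : ℝ → X →L[ℝ] X)
    (hS : ∀ τ > (0:ℝ), ∀ x : X, ‖S τ x‖ ≤ α * (τ ^ (-θ) + 1) * Real.exp (-β * τ) * ‖x‖)
    (F : ℝ → X)
    (hFm : AEStronglyMeasurable (fun τ => S τ (F τ)) (volume.restrict (Set.Ioi (0:ℝ))))
    (M : ℝ) (hFM : ∀ s, ‖F s‖ ≤ M) :
    IntegrableOn (fun τ => S τ (F τ)) (Set.Ioi 0) ∧
    ‖∫ τ in Set.Ioi (0:ℝ), S τ (F τ)‖ ≤
      α * (β ^ (θ - 1) * Real.Gamma (1 - θ) + 1 / β) * M := by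
  obtain ⟨hg_int, hg_val⟩ := kernel_integrable hα hβ hθ0 hθ1
  have hbound : ∀ᵐ τ ∂(volume.restrict (Set.Ioi (0:ℝ))),
      ‖S τ (F τ)‖ ≤ (α * (τ ^ (-θ) + 1) * Real.exp (-β * τ)) * M := by
    filter_upwards [ae_restrict_mem measurableSet_Ioi] with τ hτ
    have hτ0 : (0:ℝ) < τ := hτ
    have hg0 : 0 ≤ α * (τ ^ (-θ) + 1) * Real.exp (-β * τ) := by
      have h1 : 0 ≤ τ ^ (-θ) := Real.rpow_nonneg hτ0.le _
      positivity
    calc ‖S τ (F τ)‖ ≤ α * (τ ^ (-θ) + 1) * Real.exp (-β * τ) * ‖F τ‖ := hS τ hτ0 (F τ)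
      _ ≤ (α * (τ ^ (-θ) + 1) * Real.exp (-β * τ)) * M :=
        mul_le_mul_of_nonneg_left (hFM τ) hg0
  have hgM : Integrable (fun τ : ℝ => (α * (τ ^ (-θ) + 1) * Real.exp (-β * τ)) * M)
      (volume.restrict (Set.Ioi (0:ℝ))) := hg_int.mul_const M
  refine ⟨hgM.mono' hFm hbound, ?_⟩
  calc ‖∫ τ in Set.Ioi (0:ℝ), S τ (F τ)‖
      ≤ ∫ τ in Set.Ioi (0:ℝ), (α * (τ ^ (-θ) + 1) * Real.exp (-β * τ)) * M :=
        norm_integral_le_of_norm_le hgM hbound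
    _ = (∫ τ in Set.Ioi (0:ℝ), α * (τ ^ (-θ) + 1) * Real.exp (-β * τ)) * M := by
        rw [integral_mul_const]
    _ = α * (β ^ (θ - 1) * Real.Gamma (1 - θ) + 1 / β) * M := by rw [hg_val]

theorem convolution_preserves_almostPeriodic
    {X : Type*} [NormedAddCommGroup X] [NormedSpace ℝ X] [CompleteSpace X]
    (α β θ : ℝ) (hα : 0 < α) (hβ : 0 < β) (hθ0 : 0 ≤ θ) (hθ1 : θ < 1)
    (S : ℝ → X →L[ℝ] X)
    (hS : ∀ τ > (0:ℝ), ∀ x : X, ‖S τ x‖ ≤ α * (τ ^ (-θ) + 1) * Real.exp (-β * τ) * ‖x‖)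
    (H : ℝ → X) (hH : IsAlmostPeriodic H)
    (K : ℝ) (hK : ∀ t, ‖H t‖ ≤ K)
    (hmeas : ∀ t : ℝ, AEStronglyMeasurable (fun τ => S τ (H (t - τ)))
      (volume.restrict (Set.Ioi (0:ℝ)))) :
    (∀ t : ℝ, IntegrableOn (fun τ => S τ (H (t - τ))) (Set.Ioi 0)) ∧
    (∀ t : ℝ, ‖∫ τ in Set.Ioi (0:ℝ), S τ (H (t - τ))‖ ≤
        α * (β ^ (θ - 1) * Real.Gamma (1 - θ) + 1 / β) * K) ∧
    IsAlmostPeriodic (fun t => ∫ τ in Set.Ioi (0:ℝ), S τ (H (t - τ))) ∧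
    (∀ T : ℝ, ∀ ε : ℝ, (∀ t, ‖H (t + T) - H t‖ ≤ ε) →
      ∀ t : ℝ, ‖(∫ τ in Set.Ioi (0:ℝ), S τ (H (t + T - τ))) -
          ∫ τ in Set.Ioi (0:ℝ), S τ (H (t - τ))‖ ≤
        α * (β ^ (θ - 1) * Real.Gamma (1 - θ) + 1 / β) * ε) := by
  have h1θ : 0 < 1 - θ := by linarith
  obtain ⟨hg_int, hg_val⟩ := kernel_integrable hα hβ hθ0 hθ1
  have part12 : ∀ t : ℝ, IntegrableOn (fun τ => S τ (H (t - τ))) (Set.Ioi 0) ∧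
      ‖∫ τ in Set.Ioi (0:ℝ), S τ (H (t - τ))‖ ≤
        α * (β ^ (θ - 1) * Real.Gamma (1 - θ) + 1 / β) * K := fun t =>
    key_bound α β θ hα hβ hθ0 hθ1 S hS (fun τ => H (t - τ)) (hmeas t) K (fun s => hK _)
  have part4 : ∀ T : ℝ, ∀ ε : ℝ, (∀ t, ‖H (t + T) - H t‖ ≤ ε) →
      ∀ t : ℝ, ‖(∫ τ in Set.Ioi (0:ℝ), S τ (H (t + T - τ))) -
          ∫ τ in Set.Ioi (0:ℝ), S τ (H (t - τ))‖ ≤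
        α * (β ^ (θ - 1) * Real.Gamma (1 - θ) + 1 / β) * ε := by
    intro T ε hε t
    have hmeas' : AEStronglyMeasurable (fun τ => S τ (H (t + T - τ) - H (t - τ)))
        (volume.restrict (Set.Ioi (0:ℝ))) := by
      have := (hmeas (t + T)).sub (hmeas t)
      simp only [map_sub]; exact this
    have hεb : ∀ s : ℝ, ‖H (t + T - s) - H (t - s)‖ ≤ ε := by
      intro s
      rw [show t + T - s = (t - s) + T by ring]
      exact hε (t - s)
    have hkey := key_bound α β θ hα hβ hθ0 hθ1 S hS
      (fun τ => H (t + T - τ) - H (t - τ)) hmeas' ε hεb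
    have hi1 : IntegrableOn (fun τ => S τ (H (t + T - τ))) (Set.Ioi 0) := (part12 (t + T)).1
    have hi2 := (part12 t).1
    rw [← integral_sub hi1 hi2]
    simp_rw [← map_sub]
    exact hkey.2
  refine ⟨fun t => (part12 t).1, fun t => (part12 t).2, ⟨?_, ?_⟩, part4⟩
  · -- continuity
    have hK0 : 0 ≤ K := le_trans (norm_nonneg _) (hK 0)
    refine continuous_of_dominated hmeas (fun t => ?_)
      (hg_int.mul_const K) ?_
    · filter_upwards [ae_restrict_mem measurableSet_Ioi] with τ hτ
      have hτ0 : (0:ℝ) < τ := hτ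
      have hg0 : 0 ≤ α * (τ ^ (-θ) + 1) * Real.exp (-β * τ) := by
        have h1 : 0 ≤ τ ^ (-θ) := Real.rpow_nonneg hτ0.le _
        positivity
      calc ‖S τ (H (t - τ))‖ ≤ α * (τ ^ (-θ) + 1) * Real.exp (-β * τ) * ‖H (t - τ)‖ :=
            hS τ hτ0 _
        _ ≤ (α * (τ ^ (-θ) + 1) * Real.exp (-β * τ)) * K :=
            mul_le_mul_of_nonneg_left (hK _) hg0
    · refine Filter.Eventually.of_forall (fun τ => ?_)
      exact (S τ).continuous.comp (hH.1.comp (continuous_sub_right τ))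
  · -- almost periods
    intro ε hε
    have hΓ : 0 < Real.Gamma (1 - θ) := Real.Gamma_pos_of_pos h1θ
    have hC : 0 < α * (β ^ (θ - 1) * Real.Gamma (1 - θ) + 1 / β) := by positivity
    set C := α * (β ^ (θ - 1) * Real.Gamma (1 - θ) + 1 / β) with hCdef
    obtain ⟨ℓ, hℓ, hper⟩ := hH.2 (ε / (2 * C)) (by positivity)
    refine ⟨ℓ, hℓ, fun a => ?_⟩
    obtain ⟨T, hT, hTper⟩ := hper a
    refine ⟨T, hT, fun t => ?_⟩
    have h := part4 T (ε / (2 * C)) (fun s => (hTper s).le) t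
    have heq : C * (ε / (2 * C)) = ε / 2 := by
      field_simp
    calc ‖(∫ τ in Set.Ioi (0:ℝ), S τ (H (t + T - τ))) -
          ∫ τ in Set.Ioi (0:ℝ), S τ (H (t - τ))‖ ≤ C * (ε / (2 * C)) := h
      _ = ε / 2 := heq
      _ < ε := by linarith
end

section
/- Gronwall-type exponential decay: let $\sigma>0$, $0\le\theta<1$, $L,\alpha>0$, and let $\phi:[0,\infty)\to[0,\infty)$ be bounded measurable with $\phi(t) \le c\,e^{-\sigma t} + L\alpha\int_0^t ((t-\tau)^{-\theta}+1)e^{-\sigma(t-\tau)}\phi(\tau)\,d\tau$ for all $t\ge0$, where $c\ge0$. Suppose $0<\gamma<\sigma$ satisfies $q:=L\alpha((\sigma-\gamma)^{\theta-1}\Gamma(1-\theta)+\tfrac{1}{\sigma-\gamma})<1$. Then $\phi(t) \le \frac{c}{1-q}e^{-\gamma t}$ for all $t\ge0$. -/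
open MeasureTheory Real intervalIntegral

private lemma ker_integrableOn {θ β : ℝ} (hθ1 : θ < 1) (hβ : 0 < β) :
    IntegrableOn (fun s : ℝ => (s ^ (-θ) + 1) * Real.exp (-β * s)) (Set.Ioi 0) := by
  have h1 : IntegrableOn (fun s : ℝ => s ^ (-θ) * Real.exp (-β * s)) (Set.Ioi 0) := by
    have h := integrableOn_rpow_mul_exp_neg_mul_rpow (by linarith : (-1:ℝ) < -θ) zero_lt_one hβ
    simpa [Real.rpow_one] using h
  have h2 : IntegrableOn (fun s : ℝ => Real.exp (-β * s)) (Set.Ioi 0) := by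
    have h := integrableOn_rpow_mul_exp_neg_mul_rpow (by norm_num : (-1:ℝ) < 0) zero_lt_one hβ
    simpa [Real.rpow_one, Real.rpow_zero] using h
  have heq : (fun s : ℝ => (s ^ (-θ) + 1) * Real.exp (-β * s))
      = (fun s : ℝ => s ^ (-θ) * Real.exp (-β * s)) + fun s : ℝ => Real.exp (-β * s) :=
    funext fun s => by simp only [Pi.add_apply]; ring
  rw [IntegrableOn, heq]
  exact h1.add h2

private lemma ker_integral {θ β : ℝ} (hθ1 : θ < 1) (hβ : 0 < β) :
    ∫ s in Set.Ioi (0:ℝ), (s ^ (-θ) + 1) * Real.exp (-β * s)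
      = β ^ (θ - 1) * Real.Gamma (1 - θ) + 1 / β := by
  have h1 : IntegrableOn (fun s : ℝ => s ^ (-θ) * Real.exp (-β * s)) (Set.Ioi 0) := by
    have h := integrableOn_rpow_mul_exp_neg_mul_rpow (by linarith : (-1:ℝ) < -θ) zero_lt_one hβ
    simpa [Real.rpow_one] using h
  have h2 : IntegrableOn (fun s : ℝ => Real.exp (-β * s)) (Set.Ioi 0) := by
    have h := integrableOn_rpow_mul_exp_neg_mul_rpow (by norm_num : (-1:ℝ) < 0) zero_lt_one hβ
    simpa [Real.rpow_one, Real.rpow_zero] using h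
  have e1 : ∫ s in Set.Ioi (0:ℝ), s ^ (-θ) * Real.exp (-β * s)
      = β ^ (θ - 1) * Real.Gamma (1 - θ) := by
    have h := integral_rpow_mul_exp_neg_mul_Ioi (show (0:ℝ) < 1 - θ by linarith) hβ
    have h' : ∫ s in Set.Ioi (0:ℝ), s ^ (-θ) * Real.exp (-β * s)
        = (1/β) ^ (1-θ) * Real.Gamma (1-θ) := by
      rw [← h]
      refine setIntegral_congr_fun measurableSet_Ioi (fun x hx => ?_)
      rw [show (1:ℝ) - θ - 1 = -θ by ring, neg_mul]
    rw [h', one_div, Real.inv_rpow hβ.le, ← Real.rpow_neg hβ.le, neg_sub]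
  have e2 : ∫ s in Set.Ioi (0:ℝ), Real.exp (-β * s) = 1 / β := by
    have h := integral_rpow_mul_exp_neg_mul_Ioi (show (0:ℝ) < 1 by norm_num) hβ
    have h' : ∫ s in Set.Ioi (0:ℝ), Real.exp (-β * s)
        = (1/β) ^ (1:ℝ) * Real.Gamma 1 := by
      rw [← h]
      refine setIntegral_congr_fun measurableSet_Ioi (fun x hx => ?_)
      rw [show (1:ℝ) - 1 = 0 by ring, Real.rpow_zero, one_mul, neg_mul]
    rw [h', Real.Gamma_one, Real.rpow_one, mul_one]
  rw [show (fun s : ℝ => (s ^ (-θ) + 1) * Real.exp (-β * s))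
      = fun s : ℝ => s ^ (-θ) * Real.exp (-β * s) + Real.exp (-β * s) from funext fun s => by ring]
  rw [integral_add h1 h2, e1, e2]

private lemma ker_intervalIntegrable {θ β : ℝ} (hθ1 : θ < 1) (hβ : 0 < β) {t : ℝ} (ht : 0 ≤ t) :
    IntervalIntegrable (fun s => (s ^ (-θ) + 1) * Real.exp (-β * s)) volume 0 t :=
  (intervalIntegrable_iff_integrableOn_Ioc_of_le ht).mpr
    ((ker_integrableOn hθ1 hβ).mono_set Set.Ioc_subset_Ioi_self)

private lemma ker_intervalIntegral_le {θ β : ℝ} (hθ1 : θ < 1) (hβ : 0 < β) {t : ℝ} (ht : 0 ≤ t) :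
    ∫ s in (0:ℝ)..t, (s ^ (-θ) + 1) * Real.exp (-β * s)
      ≤ β ^ (θ - 1) * Real.Gamma (1 - θ) + 1 / β := by
  rw [intervalIntegral.integral_of_le ht, ← ker_integral hθ1 hβ]
  refine setIntegral_mono_set (ker_integrableOn hθ1 hβ) ?_
    (HasSubset.Subset.eventuallyLE Set.Ioc_subset_Ioi_self)
  filter_upwards [ae_restrict_mem measurableSet_Ioi] with x hx
  simp only [Pi.zero_apply]
  have h1 : (0:ℝ) ≤ x ^ (-θ) := Real.rpow_nonneg (le_of_lt hx) _
  have h2 := Real.exp_pos (-β * x)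
  nlinarith
theorem gronwall_exponential_decay
    (σ L α θ γ c : ℝ) (hσ : 0 < σ) (hθ0 : 0 ≤ θ) (hθ1 : θ < 1)
    (hL : 0 < L) (hα : 0 < α) (hc : 0 ≤ c)
    (hγ0 : 0 < γ) (hγσ : γ < σ)
    (hq : L * α * ((σ - γ) ^ (θ - 1) * Real.Gamma (1 - θ) + 1 / (σ - γ)) < 1)
    (φ : ℝ → ℝ) (hφmeas : Measurable φ)
    (hφnonneg : ∀ t, 0 ≤ φ t) (hφbdd : ∃ C, ∀ t, φ t ≤ C)
    (hφ : ∀ t ≥ (0:ℝ), φ t ≤ c * Real.exp (-σ * t) +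
      L * α * ∫ τ in (0:ℝ)..t, ((t - τ) ^ (-θ) + 1) * Real.exp (-σ * (t - τ)) * φ τ) :
    ∀ t ≥ (0:ℝ), φ t ≤
      c / (1 - L * α * ((σ - γ) ^ (θ - 1) * Real.Gamma (1 - θ) + 1 / (σ - γ)))
        * Real.exp (-γ * t) := by
  intro t ht
  set β := σ - γ with hβdef
  have hβ : 0 < β := sub_pos.mpr hγσ
  set K := β ^ (θ - 1) * Real.Gamma (1 - θ) + 1 / β with hKdef
  have hΓ : 0 < Real.Gamma (1 - θ) := Real.Gamma_pos_of_pos (by linarith)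
  have hK : 0 < K := by
    have h1 : 0 < β ^ (θ - 1) := Real.rpow_pos_of_pos hβ _
    have h2 : 0 < 1 / β := by positivity
    rw [hKdef]
    nlinarith
  set q := L * α * K with hqdef
  have hq0 : 0 < q := by positivity
  have hq1 : q < 1 := hq
  obtain ⟨C, hC⟩ := hφbdd
  have hC0 : 0 ≤ C := le_trans (hφnonneg 0) (hC 0)
  set F : ℝ → ℝ := fun τ => Real.exp (γ * τ) * φ τ with hFdef
  have hbdd : BddAbove (F '' Set.Icc 0 t) := by
    refine ⟨Real.exp (γ * t) * C, ?_⟩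
    rintro _ ⟨τ, hτ, rfl⟩
    exact mul_le_mul (Real.exp_le_exp.mpr
        (mul_le_mul_of_nonneg_left hτ.2 hγ0.le)) (hC τ) (hφnonneg τ) (Real.exp_pos _).le
  have hne : (F '' Set.Icc 0 t).Nonempty :=
    ⟨F 0, Set.mem_image_of_mem _ (Set.left_mem_Icc.mpr ht)⟩
  set S := sSup (F '' Set.Icc 0 t) with hSdef
  have hSle : ∀ τ ∈ Set.Icc (0:ℝ) t, F τ ≤ S :=
    fun τ hτ => le_csSup hbdd (Set.mem_image_of_mem _ hτ)
  have hS0 : 0 ≤ S := by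
    have h := hSle 0 (Set.left_mem_Icc.mpr ht)
    have hF0 : F 0 = φ 0 := by simp [hFdef]
    rw [hF0] at h
    exact le_trans (hφnonneg 0) h
  have key : ∀ u ∈ Set.Icc (0:ℝ) t, F u ≤ c + q * S := by
    intro u hu
    obtain ⟨h0u, hut⟩ := hu
    have hb := hφ u h0u
    -- interval integrability of the power part
    have hpow : IntervalIntegrable (fun τ => (u - τ) ^ (-θ) + 1) volume 0 u := by
      have h1 : IntervalIntegrable (fun s : ℝ => s ^ (-θ)) volume 0 u :=
        intervalIntegrable_rpow' (by linarith)
      have h2 := h1.comp_sub_left u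
      simp only [sub_zero, sub_self] at h2
      exact h2.symm.add intervalIntegrable_const
    -- integrability of the integrand in hφ
    have hg1 : IntervalIntegrable
        (fun τ => ((u - τ) ^ (-θ) + 1) * Real.exp (-σ * (u - τ)) * φ τ) volume 0 u := by
      rw [intervalIntegrable_iff_integrableOn_Ioc_of_le h0u]
      have hpow' : IntegrableOn (fun τ => (u - τ) ^ (-θ) + 1) (Set.Ioc 0 u) :=
        (intervalIntegrable_iff_integrableOn_Ioc_of_le h0u).mp hpow
      have hmeas : AEStronglyMeasurable (fun τ => Real.exp (-σ * (u - τ)) * φ τ)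
          (volume.restrict (Set.Ioc 0 u)) :=
        ((Real.measurable_exp.comp
          (measurable_const.mul (measurable_const.sub measurable_id))).mul
            hφmeas).aestronglyMeasurable
      have hbound : ∀ᵐ τ ∂(volume.restrict (Set.Ioc 0 u)),
          ‖Real.exp (-σ * (u - τ)) * φ τ‖ ≤ C := by
        filter_upwards [ae_restrict_mem measurableSet_Ioc] with τ hτ
        rw [Real.norm_eq_abs, abs_of_nonneg (mul_nonneg (Real.exp_pos _).le (hφnonneg τ))]
        have he : Real.exp (-σ * (u - τ)) ≤ 1 := by
          rw [show (1:ℝ) = Real.exp 0 from (Real.exp_zero).symm]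
          apply Real.exp_le_exp.mpr
          nlinarith [hτ.2]
        nlinarith [hφnonneg τ, hC τ, Real.exp_pos (-σ * (u - τ))]
      have h := Integrable.bdd_mul hpow' hmeas hbound
      exact IntegrableOn.congr_fun h (fun τ _ => by ring) measurableSet_Ioc
    set g2 : ℝ → ℝ := fun τ => ((u - τ) ^ (-θ) + 1) * Real.exp (-β * (u - τ)) * F τ with hg2def
    have hid : ∀ τ, Real.exp (γ * u) *
        (((u - τ) ^ (-θ) + 1) * Real.exp (-σ * (u - τ)) * φ τ) = g2 τ := by
      intro τ
      simp only [hg2def, hFdef]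
      rw [show Real.exp (γ * u) * (((u - τ) ^ (-θ) + 1) * Real.exp (-σ * (u - τ)) * φ τ)
          = ((u - τ) ^ (-θ) + 1) * (Real.exp (γ * u) * Real.exp (-σ * (u - τ))) * φ τ by ring,
        ← Real.exp_add, show γ * u + -σ * (u - τ) = -β * (u - τ) + γ * τ by
          rw [hβdef]; ring, Real.exp_add]
      ring
    have hg2i : IntervalIntegrable g2 volume 0 u := by
      have h := hg1.const_mul (Real.exp (γ * u))
      have heq : (fun τ => Real.exp (γ * u) *
          (((u - τ) ^ (-θ) + 1) * Real.exp (-σ * (u - τ)) * φ τ)) = g2 := funext hid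
      rwa [heq] at h
    have hker : IntervalIntegrable
        (fun τ => ((u - τ) ^ (-θ) + 1) * Real.exp (-β * (u - τ))) volume 0 u := by
      have h := (ker_intervalIntegrable hθ1 hβ h0u).comp_sub_left u
      simp only [sub_zero, sub_self] at h
      exact h.symm
    have hg3i : IntervalIntegrable
        (fun τ => ((u - τ) ^ (-θ) + 1) * Real.exp (-β * (u - τ)) * S) volume 0 u :=
      hker.mul_const S
    -- the chain of estimates
    have step1 : F u ≤ Real.exp (γ * u) * (c * Real.exp (-σ * u)) +
        Real.exp (γ * u) * (L * α * ∫ τ in (0:ℝ)..u,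
          ((u - τ) ^ (-θ) + 1) * Real.exp (-σ * (u - τ)) * φ τ) := by
      have h := mul_le_mul_of_nonneg_left hb (Real.exp_pos (γ * u)).le
      calc F u = Real.exp (γ * u) * φ u := rfl
        _ ≤ _ := by rw [← mul_add]; exact h
    have term1 : Real.exp (γ * u) * (c * Real.exp (-σ * u)) ≤ c := by
      rw [show Real.exp (γ * u) * (c * Real.exp (-σ * u))
          = c * (Real.exp (γ * u) * Real.exp (-σ * u)) by ring, ← Real.exp_add]
      have h1 : Real.exp (γ * u + -σ * u) ≤ 1 := by
        rw [show (1:ℝ) = Real.exp 0 from (Real.exp_zero).symm]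
        apply Real.exp_le_exp.mpr
        nlinarith
      nlinarith [Real.exp_pos (γ * u + -σ * u)]
    have hmove : Real.exp (γ * u) * ∫ τ in (0:ℝ)..u,
        ((u - τ) ^ (-θ) + 1) * Real.exp (-σ * (u - τ)) * φ τ
          = ∫ τ in (0:ℝ)..u, g2 τ := by
      rw [← intervalIntegral.integral_const_mul]
      exact intervalIntegral.integral_congr (fun τ _ => hid τ)
    have hmono : ∫ τ in (0:ℝ)..u, g2 τ
        ≤ ∫ τ in (0:ℝ)..u, ((u - τ) ^ (-θ) + 1) * Real.exp (-β * (u - τ)) * S := by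
      refine intervalIntegral.integral_mono_on h0u hg2i hg3i (fun τ hτ => ?_)
      have hpownn : (0:ℝ) ≤ (u - τ) ^ (-θ) := Real.rpow_nonneg (by linarith [hτ.2]) _
      have hFS := hSle τ ⟨hτ.1, le_trans hτ.2 hut⟩
      have hnn : 0 ≤ ((u - τ) ^ (-θ) + 1) * Real.exp (-β * (u - τ)) := by positivity
      calc g2 τ = ((u - τ) ^ (-θ) + 1) * Real.exp (-β * (u - τ)) * F τ := rfl
        _ ≤ _ := mul_le_mul_of_nonneg_left hFS hnn
    have hval : ∫ τ in (0:ℝ)..u, ((u - τ) ^ (-θ) + 1) * Real.exp (-β * (u - τ)) * S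
        ≤ K * S := by
      rw [intervalIntegral.integral_mul_const]
      have hsub : ∫ τ in (0:ℝ)..u, ((u - τ) ^ (-θ) + 1) * Real.exp (-β * (u - τ))
          = ∫ s in (0:ℝ)..u, (s ^ (-θ) + 1) * Real.exp (-β * s) := by
        have h := intervalIntegral.integral_comp_sub_left (a := (0:ℝ)) (b := u)
          (fun s => (s ^ (-θ) + 1) * Real.exp (-β * s)) u
        simpa using h
      rw [hsub]
      exact mul_le_mul_of_nonneg_right (ker_intervalIntegral_le hθ1 hβ h0u) hS0
    have hfinal : Real.exp (γ * u) * (L * α * ∫ τ in (0:ℝ)..u,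
        ((u - τ) ^ (-θ) + 1) * Real.exp (-σ * (u - τ)) * φ τ) ≤ q * S := by
      rw [show Real.exp (γ * u) * (L * α * ∫ τ in (0:ℝ)..u,
          ((u - τ) ^ (-θ) + 1) * Real.exp (-σ * (u - τ)) * φ τ)
        = L * α * (Real.exp (γ * u) * ∫ τ in (0:ℝ)..u,
          ((u - τ) ^ (-θ) + 1) * Real.exp (-σ * (u - τ)) * φ τ) by ring, hmove]
      have h := le_trans hmono hval
      calc L * α * ∫ τ in (0:ℝ)..u, g2 τ ≤ L * α * (K * S) := by
            exact mul_le_mul_of_nonneg_left h (by positivity)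
        _ = q * S := by rw [hqdef]; ring
    linarith [step1, term1, hfinal]
  have hScq : S ≤ c + q * S := by
    refine csSup_le hne ?_
    rintro _ ⟨u, hu, rfl⟩
    exact key u hu
  have hS : S ≤ c / (1 - q) := by
    rw [le_div_iff₀ (by linarith)]
    nlinarith
  have hFt : Real.exp (γ * t) * φ t ≤ S := hSle t (Set.right_mem_Icc.mpr ht)
  have hid2 : φ t = Real.exp (-γ * t) * (Real.exp (γ * t) * φ t) := by
    rw [← mul_assoc, ← Real.exp_add, show -γ * t + γ * t = 0 by ring, Real.exp_zero, one_mul]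
  rw [hid2, mul_comm (c / (1 - q)) (Real.exp (-γ * t))]
  exact mul_le_mul_of_nonneg_left (le_trans hFt hS) (Real.exp_pos _).le
end

section
/- Let $X,Y$ be Banach spaces, $\alpha>0$, $0<\sigma\le\beta$, $0\le\theta<1$. Let $(T_t)_{t\ge0}$ be a semigroup of operators on $Y$ with $\|T_t u_0\|_Y \le e^{-\sigma t}\|u_0\|_Y$, and $(T_tB)_{t>0}$ operators from $X$ to $Y$ with $\|T_tB x\|_Y \le \alpha(t^{-\theta}+1)e^{-\beta t}\|x\|_X$. Let $G:Y\times\mathbb{R}_+\to X$ satisfy $\sup_{t\ge0}\|G(0,t)\|_X =: b < \infty$ and $\|G(u_1,t)-G(u_2,t)\|_X \le L\|u_1-u_2\|_Y$ for $\|u_i\|_Y\le\rho$. If $u,\hat u:[0,\infty)\to Y$ are two bounded mild solutions, i.e. $u(t)-\hat u(t) = T_t(u(0)-\hat u(0)) + \int_0^t T_{t-\tau}B[G(u(\tau),\tau)-G(\hat u(\tau),\tau)]\,d\tau$, with $\|u(t)\|,\|\hat u(t)\|\le\rho$ for all $t$, and if $0<\gamma<\sigma$ satisfies $L\alpha((\sigma-\gamma)^{\theta-1}\Gamma(1-\theta)+\tfrac{1}{\sigma-\gamma})=:q<1$,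 then $\|u(t)-\hat u(t)\|_Y \le \frac{1}{1-q}e^{-\gamma t}\|u(0)-\hat u(0)\|_Y$ for all $t\ge0$. -/
open MeasureTheory Real intervalIntegral Set

lemma aux_i1 (θ c : ℝ) (hθ1 : θ < 1) (hc : 0 < c) :
    IntegrableOn (fun x : ℝ => x ^ (-θ) * Real.exp (-(c * x))) (Ioi 0) := by
  have h0 : IntegrableOn (fun x : ℝ => Real.exp (-x) * x ^ ((1 - θ) - 1)) (Ioi 0) :=
    Real.GammaIntegral_convergent (by linarith)
  have h0' : IntegrableOn (fun x : ℝ => Real.exp (-x) * x ^ (-θ)) (Ioi 0) := by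
    have : (1 - θ) - 1 = -θ := by ring
    rwa [this] at h0
  have h1 : IntegrableOn (fun x : ℝ => Real.exp (-(c * x)) * (c * x) ^ (-θ)) (Ioi 0) := by
    have := (integrableOn_Ioi_comp_mul_left_iff
      (fun x : ℝ => Real.exp (-x) * x ^ (-θ)) 0 hc).2 (by simpa using h0')
    simpa using this
  have h3 : IntegrableOn (fun x : ℝ => c ^ θ * (Real.exp (-(c * x)) * (c * x) ^ (-θ))) (Ioi 0) :=
    h1.const_mul (c ^ θ)
  refine h3.congr_fun ?_ measurableSet_Ioi
  intro x hx
  have hx0 : (0:ℝ) < x := hx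
  simp only
  rw [Real.mul_rpow hc.le hx0.le, Real.rpow_neg hc.le]
  field_simp [(Real.rpow_pos_of_pos hc θ).ne']

lemma aux_integrableOn (θ c : ℝ) (hθ1 : θ < 1) (hc : 0 < c) :
    IntegrableOn (fun r : ℝ => (r ^ (-θ) + 1) * Real.exp (-(c * r))) (Ioi 0) := by
  have h4 : IntegrableOn (fun x : ℝ => Real.exp (-(c * x))) (Ioi 0) := by
    simpa [neg_mul] using exp_neg_integrableOn_Ioi 0 hc
  have h5 : IntegrableOn
      (fun x : ℝ => x ^ (-θ) * Real.exp (-(c * x)) + Real.exp (-(c * x))) (Ioi 0) :=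
    (aux_i1 θ c hθ1 hc).add h4
  exact h5.congr_fun (fun x _ => by ring) measurableSet_Ioi

lemma aux_int_val (θ c : ℝ) (hθ1 : θ < 1) (hc : 0 < c) :
    ∫ r in Ioi (0:ℝ), (r ^ (-θ) + 1) * Real.exp (-(c * r))
      = c ^ (θ - 1) * Real.Gamma (1 - θ) + 1 / c := by
  have h2 := aux_i1 θ c hθ1 hc
  have h4 : IntegrableOn (fun x : ℝ => Real.exp (-(c * x))) (Ioi 0) := by
    simpa [neg_mul] using exp_neg_integrableOn_Ioi 0 hc
  have hsplit : ∫ r in Ioi (0:ℝ), (r ^ (-θ) + 1) * Real.exp (-(c * r))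
      = (∫ r in Ioi (0:ℝ), r ^ (-θ) * Real.exp (-(c * r)))
        + ∫ r in Ioi (0:ℝ), Real.exp (-(c * r)) := by
    rw [← integral_add h2 h4]
    exact setIntegral_congr_fun measurableSet_Ioi (fun x _ => by ring)
  have hv1 : ∫ r in Ioi (0:ℝ), r ^ (-θ) * Real.exp (-(c * r))
      = c ^ (θ - 1) * Real.Gamma (1 - θ) := by
    have := Real.integral_rpow_mul_exp_neg_mul_Ioi (a := 1 - θ) (r := c) (by linarith) hc
    have he : (1:ℝ) - θ - 1 = -θ := by ring
    rw [he] at this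
    rw [this, one_div, Real.inv_rpow hc.le, ← Real.rpow_neg hc.le,
      show -((1:ℝ) - θ) = θ - 1 from by ring]
  have hv2 : ∫ r in Ioi (0:ℝ), Real.exp (-(c * r)) = 1 / c := by
    have := Real.integral_rpow_mul_exp_neg_mul_Ioi (a := 1) (r := c) one_pos hc
    simpa [Real.Gamma_one] using this
  rw [hsplit, hv1, hv2]

lemma aux_int_le (θ c s : ℝ) (hθ1 : θ < 1) (hc : 0 < c) (hs : 0 ≤ s) :
    ∫ r in (0:ℝ)..s, (r ^ (-θ) + 1) * Real.exp (-(c * r))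
      ≤ c ^ (θ - 1) * Real.Gamma (1 - θ) + 1 / c := by
  rw [intervalIntegral.integral_of_le hs, ← aux_int_val θ c hθ1 hc]
  refine setIntegral_mono_set (aux_integrableOn θ c hθ1 hc) ?_ ?_
  · filter_upwards [ae_restrict_mem measurableSet_Ioi] with x hx
    have : (0:ℝ) < x := hx
    positivity
  · exact (ae_of_all _ Ioc_subset_Ioi_self)

theorem exponential_stability
    {X Y : Type*} [NormedAddCommGroup X] [NormedSpace ℝ X]
    [NormedAddCommGroup Y] [NormedSpace ℝ Y] [CompleteSpace Y]
    (α σ β θ L b ρ γ : ℝ)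
    (hα : 0 < α) (hσ : 0 < σ) (hσβ : σ ≤ β) (hθ0 : 0 ≤ θ) (hθ1 : θ < 1)
    (hL : 0 < L) (hb : 0 ≤ b) (hρ : 0 < ρ)
    (T : ℝ → Y →L[ℝ] Y)
    (hT : ∀ t ≥ (0:ℝ), ∀ y : Y, ‖T t y‖ ≤ Real.exp (-σ * t) * ‖y‖)
    (TB : ℝ → X →L[ℝ] Y)
    (hTB : ∀ t > (0:ℝ), ∀ x : X,
      ‖TB t x‖ ≤ α * (t ^ (-θ) + 1) * Real.exp (-β * t) * ‖x‖)
    (G : Y → ℝ → X)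
    (hGb : ∀ t ≥ (0:ℝ), ‖G 0 t‖ ≤ b)
    (hGlip : ∀ (u₁ u₂ : Y) (t : ℝ), 0 ≤ t → ‖u₁‖ ≤ ρ → ‖u₂‖ ≤ ρ →
      ‖G u₁ t - G u₂ t‖ ≤ L * ‖u₁ - u₂‖)
    (u uh : ℝ → Y) (huc : Continuous u) (huhc : Continuous uh)
    (hub : ∀ t ≥ (0:ℝ), ‖u t‖ ≤ ρ) (huhb : ∀ t ≥ (0:ℝ), ‖uh t‖ ≤ ρ)
    (hmild : ∀ t ≥ (0:ℝ), u t - uh t = T t (u 0 - uh 0) +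
      ∫ τ in (0:ℝ)..t, TB (t - τ) (G (u τ) τ - G (uh τ) τ))
    (hγ0 : 0 < γ) (hγσ : γ < σ)
    (hq : L * α * ((σ - γ) ^ (θ - 1) * Real.Gamma (1 - θ) + 1 / (σ - γ)) < 1) :
    ∀ t ≥ (0:ℝ), ‖u t - uh t‖ ≤
      (1 / (1 - L * α * ((σ - γ) ^ (θ - 1) * Real.Gamma (1 - θ) + 1 / (σ - γ))))
        * Real.exp (-γ * t) * ‖u 0 - uh 0‖ := by
  intro t ht
  have hc : (0:ℝ) < σ - γ := by linarith
  have hΓ : 0 < Real.Gamma (1 - θ) := Real.Gamma_pos_of_pos (by linarith)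
  set K : ℝ := (σ - γ) ^ (θ - 1) * Real.Gamma (1 - θ) + 1 / (σ - γ) with hK_def
  have hK0 : 0 < K :=
    add_pos (mul_pos (Real.rpow_pos_of_pos hc _) hΓ) (by positivity)
  have hq0 : 0 < L * α * K := by positivity
  have h1q : 0 < 1 - L * α * K := by linarith
  -- maximum of the weighted norm on [0, t]
  have hwc : Continuous fun s : ℝ => Real.exp (γ * s) * ‖u s - uh s‖ :=
    (Real.continuous_exp.comp (continuous_const.mul continuous_id)).mul ((huc.sub huhc).norm)
  obtain ⟨s₀, hmem, hmax⟩ :=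
    isCompact_Icc.exists_isMaxOn (nonempty_Icc.2 ht) hwc.continuousOn
  have hs₀0 : (0:ℝ) ≤ s₀ := hmem.1
  have hs₀t : s₀ ≤ t := hmem.2
  set W : ℝ := Real.exp (γ * s₀) * ‖u s₀ - uh s₀‖ with hW_def
  have hW0 : 0 ≤ W := by positivity
  have hΔτ : ∀ τ : ℝ, 0 ≤ τ → τ ≤ t → ‖u τ - uh τ‖ ≤ Real.exp (-(γ * τ)) * W := by
    intro τ h0 h1
    have hm : Real.exp (γ * τ) * ‖u τ - uh τ‖ ≤ W := hmax (mem_Icc.2 ⟨h0, h1⟩)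
    calc ‖u τ - uh τ‖
        = Real.exp (-(γ * τ)) * (Real.exp (γ * τ) * ‖u τ - uh τ‖) := by
          rw [← mul_assoc, ← Real.exp_add]; simp
      _ ≤ Real.exp (-(γ * τ)) * W := by
          exact mul_le_mul_of_nonneg_left hm (Real.exp_pos _).le
  set C : ℝ := L * α * W * Real.exp (-(γ * s₀)) with hC_def
  have hC0 : 0 ≤ C := by positivity
  -- integrability of the comparison function
  have hf0 : IntervalIntegrable
      (fun r : ℝ => (r ^ (-θ) + 1) * Real.exp (-((σ - γ) * r))) volume 0 s₀ := by
    apply IntervalIntegrable.mul_continuousOn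
    · exact (intervalIntegrable_rpow' (by linarith)).add intervalIntegrable_const
    · exact (Real.continuous_exp.comp (continuous_const.mul continuous_id).neg).continuousOn
  have hg : IntervalIntegrable
      (fun τ : ℝ => C * (((s₀ - τ) ^ (-θ) + 1) * Real.exp (-((σ - γ) * (s₀ - τ)))))
      volume 0 s₀ := by
    have h' := hf0.comp_sub_left s₀
    rw [sub_zero, sub_self] at h'
    exact (h'.symm).const_mul C
  -- a.e. bound on the integrand
  have hae : ∀ᵐ τ ∂volume.restrict (Set.uIoc (0:ℝ) s₀),
      ‖TB (s₀ - τ) (G (u τ) τ - G (uh τ) τ)‖ ≤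
        C * (((s₀ - τ) ^ (-θ) + 1) * Real.exp (-((σ - γ) * (s₀ - τ)))) := by
    rw [Set.uIoc_of_le hs₀0, ← Measure.restrict_congr_set Ioo_ae_eq_Ioc]
    filter_upwards [ae_restrict_mem measurableSet_Ioo] with τ hτ
    obtain ⟨hτ0, hτs⟩ := hτ
    have hr : (0:ℝ) < s₀ - τ := by linarith
    have hA : (0:ℝ) ≤ (s₀ - τ) ^ (-θ) + 1 := by positivity
    have h1 := hTB (s₀ - τ) hr (G (u τ) τ - G (uh τ) τ)
    have h2 := hGlip (u τ) (uh τ) τ hτ0.le (hub τ hτ0.le) (huhb τ hτ0.le)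
    have h3 := hΔτ τ hτ0.le (by linarith)
    have hE : Real.exp (-β * (s₀ - τ)) * Real.exp (-(γ * τ)) ≤
        Real.exp (-((σ - γ) * (s₀ - τ))) * Real.exp (-(γ * s₀)) := by
      rw [← Real.exp_add, ← Real.exp_add]
      apply Real.exp_le_exp.2
      nlinarith [hr.le, hσβ]
    calc ‖TB (s₀ - τ) (G (u τ) τ - G (uh τ) τ)‖
        ≤ α * ((s₀ - τ) ^ (-θ) + 1) * Real.exp (-β * (s₀ - τ)) *
            ‖G (u τ) τ - G (uh τ) τ‖ := h1
      _ ≤ α * ((s₀ - τ) ^ (-θ) + 1) * Real.exp (-β * (s₀ - τ)) * (L * ‖u τ - uh τ‖) := by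
          refine mul_le_mul_of_nonneg_left h2 ?_
          positivity
      _ ≤ α * ((s₀ - τ) ^ (-θ) + 1) * Real.exp (-β * (s₀ - τ)) *
            (L * (Real.exp (-(γ * τ)) * W)) := by
          refine mul_le_mul_of_nonneg_left (mul_le_mul_of_nonneg_left h3 hL.le) ?_
          positivity
      _ = (α * ((s₀ - τ) ^ (-θ) + 1) * (L * W)) *
            (Real.exp (-β * (s₀ - τ)) * Real.exp (-(γ * τ))) := by ring
      _ ≤ (α * ((s₀ - τ) ^ (-θ) + 1) * (L * W)) *
            (Real.exp (-((σ - γ) * (s₀ - τ))) * Real.exp (-(γ * s₀))) := by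
          refine mul_le_mul_of_nonneg_left hE ?_
          positivity
      _ = C * (((s₀ - τ) ^ (-θ) + 1) * Real.exp (-((σ - γ) * (s₀ - τ)))) := by
          rw [hC_def]; ring
  -- bound the integral term
  have hInorm : ‖∫ τ in (0:ℝ)..s₀, TB (s₀ - τ) (G (u τ) τ - G (uh τ) τ)‖ ≤ C * K := by
    have h0 := intervalIntegral.norm_integral_le_abs_of_norm_le hae hg
    have hcomp : ∫ τ in (0:ℝ)..s₀,
        ((s₀ - τ) ^ (-θ) + 1) * Real.exp (-((σ - γ) * (s₀ - τ)))
        = ∫ r in (0:ℝ)..s₀, (r ^ (-θ) + 1) * Real.exp (-((σ - γ) * r)) := by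
      have := intervalIntegral.integral_comp_sub_left (a := (0:ℝ)) (b := s₀)
        (fun r : ℝ => (r ^ (-θ) + 1) * Real.exp (-((σ - γ) * r))) s₀
      simpa using this
    have hval : ∫ τ in (0:ℝ)..s₀,
        C * (((s₀ - τ) ^ (-θ) + 1) * Real.exp (-((σ - γ) * (s₀ - τ))))
        = C * ∫ r in (0:ℝ)..s₀, (r ^ (-θ) + 1) * Real.exp (-((σ - γ) * r)) := by
      rw [intervalIntegral.integral_const_mul, hcomp]
    have hfnn : 0 ≤ ∫ r in (0:ℝ)..s₀, (r ^ (-θ) + 1) * Real.exp (-((σ - γ) * r)) := by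
      refine intervalIntegral.integral_nonneg hs₀0 ?_
      intro r hr
      have hr0 : (0:ℝ) ≤ r := hr.1
      have := Real.rpow_nonneg hr0 (-θ)
      positivity
    have hle := aux_int_le θ (σ - γ) s₀ hθ1 hc hs₀0
    calc ‖∫ τ in (0:ℝ)..s₀, TB (s₀ - τ) (G (u τ) τ - G (uh τ) τ)‖
        ≤ |∫ τ in (0:ℝ)..s₀,
            C * (((s₀ - τ) ^ (-θ) + 1) * Real.exp (-((σ - γ) * (s₀ - τ))))| := h0
      _ = C * ∫ r in (0:ℝ)..s₀, (r ^ (-θ) + 1) * Real.exp (-((σ - γ) * r)) := by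
          rw [hval, abs_of_nonneg (mul_nonneg hC0 hfnn)]
      _ ≤ C * K := mul_le_mul_of_nonneg_left hle hC0
  -- the key inequality at s₀
  have hkey : ‖u s₀ - uh s₀‖ ≤ Real.exp (-σ * s₀) * ‖u 0 - uh 0‖ + C * K := by
    calc ‖u s₀ - uh s₀‖
        = ‖T s₀ (u 0 - uh 0) +
            ∫ τ in (0:ℝ)..s₀, TB (s₀ - τ) (G (u τ) τ - G (uh τ) τ)‖ := by
          rw [← hmild s₀ hs₀0]
      _ ≤ ‖T s₀ (u 0 - uh 0)‖ +
            ‖∫ τ in (0:ℝ)..s₀, TB (s₀ - τ) (G (u τ) τ - G (uh τ) τ)‖ := norm_add_le _ _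
      _ ≤ Real.exp (-σ * s₀) * ‖u 0 - uh 0‖ + C * K :=
          add_le_add (hT s₀ hs₀0 (u 0 - uh 0)) hInorm
  -- conclude W ≤ ‖Δ0‖ + q W
  have hWq : W ≤ ‖u 0 - uh 0‖ + (L * α * K) * W := by
    have h1 : W ≤ Real.exp (γ * s₀) * (Real.exp (-σ * s₀) * ‖u 0 - uh 0‖ + C * K) := by
      rw [hW_def]
      exact mul_le_mul_of_nonneg_left hkey (Real.exp_pos _).le
    have h2 : Real.exp (γ * s₀) * Real.exp (-σ * s₀) ≤ 1 := by
      rw [← Real.exp_add]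
      apply Real.exp_le_one_iff.2
      nlinarith [hs₀0]
    have h3 : Real.exp (γ * s₀) * Real.exp (-(γ * s₀)) = 1 := by
      rw [← Real.exp_add]; simp
    calc W ≤ Real.exp (γ * s₀) * (Real.exp (-σ * s₀) * ‖u 0 - uh 0‖ + C * K) := h1
      _ = (Real.exp (γ * s₀) * Real.exp (-σ * s₀)) * ‖u 0 - uh 0‖
            + (Real.exp (γ * s₀) * Real.exp (-(γ * s₀))) * (L * α * W * K) := by
          rw [hC_def]; ring
      _ ≤ 1 * ‖u 0 - uh 0‖ + 1 * (L * α * W * K) := by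
          refine add_le_add (mul_le_mul_of_nonneg_right h2 (norm_nonneg _)) ?_
          rw [h3]
      _ = ‖u 0 - uh 0‖ + (L * α * K) * W := by ring
  have hWfin : W ≤ 1 / (1 - L * α * K) * ‖u 0 - uh 0‖ := by
    rw [div_mul_eq_mul_div, le_div_iff₀ h1q]
    nlinarith [hWq]
  have hwt : Real.exp (γ * t) * ‖u t - uh t‖ ≤ W := hmax (mem_Icc.2 ⟨ht, le_refl t⟩)
  calc ‖u t - uh t‖
      = Real.exp (-(γ * t)) * (Real.exp (γ * t) * ‖u t - uh t‖) := by
        rw [← mul_assoc, ← Real.exp_add]; simp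
    _ ≤ Real.exp (-(γ * t)) * W := mul_le_mul_of_nonneg_left hwt (Real.exp_pos _).le
    _ ≤ Real.exp (-(γ * t)) * (1 / (1 - L * α * K) * ‖u 0 - uh 0‖) :=
        mul_le_mul_of_nonneg_left hWfin (Real.exp_pos _).le
    _ = 1 / (1 - L * α * K) * Real.exp (-γ * t) * ‖u 0 - uh 0‖ := by
        rw [neg_mul]; ring
end
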